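/- Every involution y in S_n admits an involution word: there exists a sequence of simple transpositions s_{a_1},…,s_{a_k} such that y = ((1 ⋊ s_{a_1}) ⋊ s_{a_2}) ⋊ ⋯ ⋊ s_{a_k}, and any such sequence of minimal length has length equal to (ℓ(y) + κ(y))/2, where κ(y) is the number of 2-cycles of y. -/

import Mathlib

/-- The Coxeter length of a permutation of `Fin n`, i.e. its number of inversions. -/
def ell {n : ℕ} (w : Equiv.Perm (Fin n)) : ℕ :=
  (Finset.univ.filter (fun p : Fin n × Fin n => p.1 < p.2 ∧ w p.2 < w p.1)).card

/-- The number of two-cycles of an involution `y`. -/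
def kap {n : ℕ} (y : Equiv.Perm (Fin n)) : ℕ :=
  (Finset.univ.filter (fun i : Fin n => i < y i)).card

/-- `s` is a simple transposition `(i, i+1)` of `Fin n`. -/
def IsSimple {n : ℕ} (s : Equiv.Perm (Fin n)) : Prop :=
  ∃ i : ℕ, ∃ h : i + 1 < n, s = Equiv.swap ⟨i, Nat.lt_of_succ_lt h⟩ ⟨i + 1, h⟩

/-- The Richardson–Springer operation `g ⋊ s`. -/
def smult {n : ℕ} (g s : Equiv.Perm (Fin n)) : Equiv.Perm (Fin n) :=
  if s * g = g * s then g * s else s * g * s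

namespace InvolWord

open Finset Equiv

variable {n : ℕ}


lemma swap_lt {a b x y : Fin n} (hab : (a:ℕ)+1 = b) (hxy : x < y) :
    (x = a ∧ y = b) ∨ Equiv.swap a b x < Equiv.swap a b y := by
  by_cases h : x = a ∧ y = b
  · exact Or.inl h
  · right
    rw [Equiv.swap_apply_def, Equiv.swap_apply_def]
    split_ifs <;> simp only [Fin.ext_iff, Fin.lt_def] at * <;> omega

lemma ell_mul_swap {a b : Fin n} (hab : (a:ℕ)+1 = b) (w : Equiv.Perm (Fin n)) :
    (w a < w b → ell (w * Equiv.swap a b) = ell w + 1) ∧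
    (w b < w a → ell (w * Equiv.swap a b) + 1 = ell w) := by
  set s := Equiv.swap a b with hs
  have hab' : a < b := by rw [Fin.lt_def]; omega
  have hsa : s a = b := Equiv.swap_apply_left a b
  have hsb : s b = a := Equiv.swap_apply_right a b
  have hss : ∀ x, s (s x) = x := fun x => Equiv.swap_apply_self a b x
  set F := (univ.filter (fun p : Fin n × Fin n => p.1 < p.2 ∧ (w*s) p.2 < (w*s) p.1)) with hF
  set G := (univ.filter (fun p : Fin n × Fin n => p.1 < p.2 ∧ w p.2 < w p.1)) with hG
  have key : (F.erase (a,b)).card = (G.erase (a,b)).card := by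
    apply Finset.card_bij (fun p _ => (s p.1, s p.2))
    · rintro ⟨p1, p2⟩ hp
      simp only [hF, Finset.mem_erase, Finset.mem_filter, Finset.mem_univ, true_and] at hp
      simp only [Equiv.Perm.mul_apply] at hp
      obtain ⟨hne, hlt, hinv⟩ := hp
      have hor := swap_lt hab hlt
      rcases hor with ⟨rfl, rfl⟩ | hlt'
      · exact absurd rfl hne
      · simp only [hG, Finset.mem_erase, Finset.mem_filter, Finset.mem_univ, true_and]
        refine ⟨?_, hlt', hinv⟩
        intro h1
        rw [Prod.ext_iff] at h1
        obtain ⟨e1, e2⟩ := h1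
        dsimp only at e1 e2
        have e1' : p1 = b := by rw [← hss p1, e1, hsa]
        have e2' : p2 = a := by rw [← hss p2, e2, hsb]
        rw [e1', e2'] at hlt
        exact absurd hlt (lt_asymm hab')
    · rintro ⟨p1, p2⟩ h1 ⟨q1, q2⟩ h2 heq
      rw [Prod.ext_iff] at heq
      obtain ⟨e1, e2⟩ := heq
      simp only at e1 e2
      have e1' : p1 = q1 := by rw [← hss p1, e1, hss]
      have e2' : p2 = q2 := by rw [← hss p2, e2, hss]
      rw [e1', e2']
    · rintro ⟨q1, q2⟩ hq
      refine ⟨(s q1, s q2), ?_, by simp [hss]⟩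
      simp only [hG, Finset.mem_erase, Finset.mem_filter, Finset.mem_univ, true_and] at hq
      obtain ⟨hne, hlt, hinv⟩ := hq
      have hor := swap_lt hab hlt
      rcases hor with ⟨rfl, rfl⟩ | hlt'
      · exact absurd rfl hne
      · simp only [hF, Finset.mem_erase, Finset.mem_filter, Finset.mem_univ, true_and]
        simp only [Equiv.Perm.mul_apply, hss]
        refine ⟨?_, hlt', hinv⟩
        intro h1
        rw [Prod.ext_iff] at h1
        obtain ⟨e1, e2⟩ := h1
        dsimp only at e1 e2
        have e1' : q1 = b := by rw [← hss q1, e1, hsa]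
        have e2' : q2 = a := by rw [← hss q2, e2, hsb]
        rw [e1', e2'] at hlt
        exact absurd hlt (lt_asymm hab')
  constructor
  · intro hwab
    have hmemF : (a,b) ∈ F := by
      simp only [hF, Finset.mem_filter, Finset.mem_univ, true_and]
      simp only [Equiv.Perm.mul_apply, hsa, hsb]
      exact ⟨hab', hwab⟩
    have hnmemG : (a,b) ∉ G := by
      simp only [hG, Finset.mem_filter, Finset.mem_univ, true_and, not_and]
      intro _; exact lt_asymm hwab
    have h1 : (F.erase (a,b)).card + 1 = F.card := Finset.card_erase_add_one hmemF
    have h2 : G.erase (a,b) = G := Finset.erase_eq_of_notMem hnmemG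
    show F.card = G.card + 1
    rw [← h1, key, h2]
  · intro hwab
    have hmemG : (a,b) ∈ G := by
      simp only [hG, Finset.mem_filter, Finset.mem_univ, true_and]
      exact ⟨hab', hwab⟩
    have hnmemF : (a,b) ∉ F := by
      simp only [hF, Finset.mem_filter, Finset.mem_univ, true_and]
      simp only [Equiv.Perm.mul_apply, hsa, hsb, not_and]
      intro _; exact lt_asymm hwab
    have h1 : (G.erase (a,b)).card + 1 = G.card := Finset.card_erase_add_one hmemG
    have h2 : F.erase (a,b) = F := Finset.erase_eq_of_notMem hnmemF
    show F.card + 1 = G.card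
    rw [← h2, key, h1]

lemma ell_inv (w : Equiv.Perm (Fin n)) : ell w⁻¹ = ell w := by
  apply Finset.card_bij (fun p _ => (w⁻¹ p.2, w⁻¹ p.1))
  · rintro ⟨p1, p2⟩ hp
    simp only [Finset.mem_filter, Finset.mem_univ, true_and] at hp ⊢
    exact ⟨hp.2, by simp [hp.1]⟩
  · rintro ⟨p1,p2⟩ h1 ⟨q1,q2⟩ h2 heq
    rw [Prod.ext_iff] at heq
    obtain ⟨e1, e2⟩ := heq
    simp only [EmbeddingLike.apply_eq_iff_eq] at e1 e2
    simp [Prod.ext_iff, e1, e2]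
  · rintro ⟨q1, q2⟩ hq
    simp only [Finset.mem_filter, Finset.mem_univ, true_and] at hq
    refine ⟨(w q2, w q1), ?_, by simp⟩
    simp only [Finset.mem_filter, Finset.mem_univ, true_and]
    exact ⟨hq.2, by simp [hq.1]⟩

lemma ell_swap_mul {a b : Fin n} (hab : (a:ℕ)+1 = b) (w : Equiv.Perm (Fin n)) :
    (w⁻¹ a < w⁻¹ b → ell (Equiv.swap a b * w) = ell w + 1) ∧
    (w⁻¹ b < w⁻¹ a → ell (Equiv.swap a b * w) + 1 = ell w) := by
  have h1 : ell (Equiv.swap a b * w) = ell (w⁻¹ * Equiv.swap a b) := by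
    rw [← ell_inv (Equiv.swap a b * w), mul_inv_rev, Equiv.swap_inv]
  have h2 := ell_mul_swap hab w⁻¹
  rw [h1]
  rw [ell_inv w] at h2
  exact h2


lemma apply_apply {y : Equiv.Perm (Fin n)} (hy : y * y = 1) (x : Fin n) : y (y x) = x := by
  have := congrArg (fun z : Equiv.Perm (Fin n) => z x) hy
  simpa using this

lemma two_kap (y : Equiv.Perm (Fin n)) (hy : y * y = 1) :
    2 * kap y = (univ.filter (fun j : Fin n => y j ≠ j)).card := by
  have hyy := apply_apply hy
  have h1 : (univ.filter (fun j : Fin n => y j < j)).card = kap y := by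
    apply Finset.card_bij (fun j _ => y j)
    · intro j hj
      simp only [Finset.mem_filter, Finset.mem_univ, true_and] at hj ⊢
      rw [hyy]; exact hj
    · intro j₁ h₁ j₂ h₂ he
      exact y.injective he
    · intro i hi
      simp only [Finset.mem_filter, Finset.mem_univ, true_and] at hi
      exact ⟨y i, by simp only [Finset.mem_filter, Finset.mem_univ, true_and, hyy]; exact hi,
        hyy i⟩
  have h2 : (univ.filter (fun j : Fin n => y j ≠ j)) =
      (univ.filter (fun j : Fin n => j < y j)) ∪ (univ.filter (fun j : Fin n => y j < j)) := by
    ext j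
    simp only [Finset.mem_filter, Finset.mem_univ, true_and, Finset.mem_union]
    constructor
    · intro h; rcases lt_or_gt_of_ne h with h' | h'
      · exact Or.inr h'
      · exact Or.inl h'
    · rintro (h | h)
      · exact ne_of_gt h
      · exact ne_of_lt h
  have hdisj : Disjoint (univ.filter (fun j : Fin n => j < y j))
      (univ.filter (fun j : Fin n => y j < j)) := by
    rw [Finset.disjoint_left]
    intro j hj hj'
    simp only [Finset.mem_filter, Finset.mem_univ, true_and] at hj hj'
    exact lt_asymm hj hj'
  rw [h2, Finset.card_union_of_disjoint hdisj, h1]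
  unfold kap
  ring

lemma kap_conj {a b : Fin n} (y : Equiv.Perm (Fin n)) (hy : y * y = 1) :
    kap (Equiv.swap a b * y * Equiv.swap a b) = kap y := by
  set s := Equiv.swap a b with hs
  have hss : ∀ x, s (s x) = x := fun x => Equiv.swap_apply_self a b x
  have hz : (s * y * s) * (s * y * s) = 1 := by
    have h1 : s * s = 1 := Equiv.swap_mul_self a b
    calc s * y * s * (s * y * s) = s * y * (s * s) * y * s := by group
    _ = s * (y * y) * s := by rw [h1]; group
    _ = 1 := by rw [hy, mul_one, h1]
  have t1 := two_kap y hy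
  have t2 := two_kap (s * y * s) hz
  have himg : (univ.filter (fun j : Fin n => (s * y * s) j ≠ j)) =
      (univ.filter (fun j : Fin n => y j ≠ j)).image s := by
    ext j
    simp only [Finset.mem_filter, Finset.mem_univ, true_and, Finset.mem_image]
    simp only [Equiv.Perm.mul_apply]
    constructor
    · intro h
      refine ⟨s j, ?_, hss j⟩
      intro he
      apply h
      rw [he, hss]
    · rintro ⟨x, hx, rfl⟩
      rw [hss]
      intro he
      exact hx (s.injective he)
  rw [himg, Finset.card_image_of_injective _ s.injective] at t2
  omega

lemma kap_fix {a b : Fin n} (hab : (a:ℕ)+1 = b) (y : Equiv.Perm (Fin n))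
    (hya : y a = a) (hyb : y b = b) :
    kap (y * Equiv.swap a b) = kap y + 1 := by
  have hab' : a < b := by rw [Fin.lt_def]; omega
  have hne : a ≠ b := ne_of_lt hab'
  have heq : (univ.filter (fun j : Fin n => j < (y * Equiv.swap a b) j)) =
      insert a (univ.filter (fun j : Fin n => j < y j)) := by
    ext j
    simp only [Finset.mem_filter, Finset.mem_univ, true_and, Finset.mem_insert]
    simp only [Equiv.Perm.mul_apply]
    rcases eq_or_ne j a with rfl | hja
    · refine iff_of_true ?_ (Or.inl rfl)
      rw [Equiv.swap_apply_left, hyb]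
      exact hab'
    · rcases eq_or_ne j b with rfl | hjb
      · rw [Equiv.swap_apply_right, hya, hyb]
        constructor
        · intro h; exact absurd h (lt_asymm hab')
        · rintro (h | h)
          · exact absurd h (Ne.symm hne)
          · exact absurd h (lt_irrefl _)
      · rw [Equiv.swap_apply_of_ne_of_ne hja hjb]
        simp [hja]
  rw [kap, heq, Finset.card_insert_of_notMem, kap]
  simp only [Finset.mem_filter, Finset.mem_univ, true_and, hya]
  exact lt_irrefl a

lemma kap_swapcase {a b : Fin n} (hab : (a:ℕ)+1 = b) (y : Equiv.Perm (Fin n))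
    (hya : y a = b) (hyb : y b = a) :
    kap y = kap (y * Equiv.swap a b) + 1 := by
  have hab' : a < b := by rw [Fin.lt_def]; omega
  have hne : a ≠ b := ne_of_lt hab'
  have heq : (univ.filter (fun j : Fin n => j < y j)) =
      insert a (univ.filter (fun j : Fin n => j < (y * Equiv.swap a b) j)) := by
    ext j
    simp only [Finset.mem_filter, Finset.mem_univ, true_and, Finset.mem_insert]
    simp only [Equiv.Perm.mul_apply]
    rcases eq_or_ne j a with rfl | hja
    · refine iff_of_true ?_ (Or.inl rfl)
      rw [hya]
      exact hab'
    · rcases eq_or_ne j b with rfl | hjb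
      · rw [Equiv.swap_apply_right, hya, hyb]
        constructor
        · intro h; exact absurd h (lt_asymm hab')
        · rintro (h | h)
          · exact absurd h (Ne.symm hne)
          · exact absurd h (lt_irrefl _)
      · rw [Equiv.swap_apply_of_ne_of_ne hja hjb]
        simp [hja]
  rw [kap, heq, Finset.card_insert_of_notMem, kap]
  simp only [Finset.mem_filter, Finset.mem_univ, true_and]
  simp only [Equiv.Perm.mul_apply, Equiv.swap_apply_left, hyb]
  exact lt_irrefl a

lemma commute_cases {a b : Fin n} (hab : (a:ℕ)+1 = b) (y : Equiv.Perm (Fin n))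
    (hc : Equiv.swap a b * y = y * Equiv.swap a b) :
    (y a = a ∧ y b = b) ∨ (y a = b ∧ y b = a) := by
  have hne : a ≠ b := by
    intro h; rw [h] at hab; omega
  have h1 : Equiv.swap a b (y a) = y b := by
    have h0 := congrArg (fun z : Equiv.Perm (Fin n) => z a) hc
    simp only [Equiv.Perm.mul_apply] at h0
    rw [Equiv.swap_apply_left] at h0
    exact h0
  by_cases h2 : y a = a
  · left; refine ⟨h2, ?_⟩; rw [← h1, h2, Equiv.swap_apply_left]
  by_cases h3 : y a = b
  · right; refine ⟨h3, ?_⟩; rw [← h1, h3, Equiv.swap_apply_right]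
  · exfalso
    rw [Equiv.swap_apply_of_ne_of_ne h2 h3] at h1
    exact hne (y.injective h1)

lemma commute_of_fix {a b : Fin n} (y : Equiv.Perm (Fin n)) (hy : y * y = 1)
    (hya : y a = a) (hyb : y b = b) :
    Equiv.swap a b * y = y * Equiv.swap a b := by
  apply Equiv.ext
  intro x
  simp only [Equiv.Perm.mul_apply]
  rcases eq_or_ne x a with rfl | hxa
  · rw [hya, Equiv.swap_apply_left, hyb]
  rcases eq_or_ne x b with rfl | hxb
  · rw [hyb, Equiv.swap_apply_right, hya]
  · have h1 : y x ≠ a := fun h => hxa (by rw [← apply_apply hy x, h]; exact hya)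
    have h2 : y x ≠ b := fun h => hxb (by rw [← apply_apply hy x, h]; exact hyb)
    rw [Equiv.swap_apply_of_ne_of_ne h1 h2, Equiv.swap_apply_of_ne_of_ne hxa hxb]

lemma commute_of_swap {a b : Fin n} (y : Equiv.Perm (Fin n)) (hy : y * y = 1)
    (hya : y a = b) (hyb : y b = a) :
    Equiv.swap a b * y = y * Equiv.swap a b := by
  apply Equiv.ext
  intro x
  simp only [Equiv.Perm.mul_apply]
  rcases eq_or_ne x a with rfl | hxa
  · rw [hya, Equiv.swap_apply_right, Equiv.swap_apply_left, hyb]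
  rcases eq_or_ne x b with rfl | hxb
  · rw [hyb, Equiv.swap_apply_left, Equiv.swap_apply_right, hya]
  · have h1 : y x ≠ a := fun h => hxb (by rw [← apply_apply hy x, h]; exact hya)
    have h2 : y x ≠ b := fun h => hxa (by rw [← apply_apply hy x, h]; exact hyb)
    rw [Equiv.swap_apply_of_ne_of_ne h1 h2, Equiv.swap_apply_of_ne_of_ne hxa hxb]

lemma step {a b : Fin n} (hab : (a:ℕ)+1 = b) (y : Equiv.Perm (Fin n)) (hy : y * y = 1) :
    (smult y (Equiv.swap a b)) * (smult y (Equiv.swap a b)) = 1 ∧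
    smult (smult y (Equiv.swap a b)) (Equiv.swap a b) = y ∧
    ((y a < y b ∧
        ell (smult y (Equiv.swap a b)) + kap (smult y (Equiv.swap a b)) = ell y + kap y + 2) ∨
     (y b < y a ∧
        ell (smult y (Equiv.swap a b)) + kap (smult y (Equiv.swap a b)) + 2 = ell y + kap y)) := by
  set s := Equiv.swap a b with hs
  have hss : s * s = 1 := Equiv.swap_mul_self a b
  have hab' : a < b := by rw [Fin.lt_def]; omega
  have hyab : y a ≠ y b := fun h => (ne_of_lt hab') (y.injective h)
  by_cases hc : s * y = y * s
  · have hz : smult y s = y * s := by rw [smult, if_pos hc]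
    have hzz : (y * s) * (y * s) = 1 := by
      calc (y * s) * (y * s) = y * (s * y) * s := by group
      _ = y * (y * s) * s := by rw [hc]
      _ = (y * y) * (s * s) := by group
      _ = 1 := by rw [hy, hss, one_mul]
    have hcz : s * (y * s) = (y * s) * s := by rw [← mul_assoc, hc]
    have hsm2 : smult (smult y s) s = y := by
      rw [hz, smult, if_pos hcz, mul_assoc, hss, mul_one]
    rcases commute_cases hab y hc with ⟨h1, h2⟩ | ⟨h1, h2⟩
    · refine ⟨by rw [hz]; exact hzz, hsm2, Or.inl ⟨by rw [h1, h2]; exact hab', ?_⟩⟩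
      have e1 : ell (y * s) = ell y + 1 :=
        (ell_mul_swap hab y).1 (by rw [h1, h2]; exact hab')
      have e2 : kap (y * s) = kap y + 1 := kap_fix hab y h1 h2
      rw [hz]
      omega
    · refine ⟨by rw [hz]; exact hzz, hsm2, Or.inr ⟨by rw [h1, h2]; exact hab', ?_⟩⟩
      have e1 : ell (y * s) + 1 = ell y :=
        (ell_mul_swap hab y).2 (by rw [h1, h2]; exact hab')
      have e2 : kap y = kap (y * s) + 1 := kap_swapcase hab y h1 h2
      rw [hz]
      omega
  · have hz : smult y s = s * y * s := by rw [smult, if_neg hc]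
    have hzz : (s * y * s) * (s * y * s) = 1 := by
      calc (s * y * s) * (s * y * s) = s * y * (s * s) * y * s := by group
      _ = s * (y * y) * s := by rw [hss]; group
      _ = 1 := by rw [hy, mul_one, hss]
    have hcz : ¬ (s * (s * y * s) = (s * y * s) * s) := by
      intro h
      apply hc
      have h' : y * s = s * y := by
        calc y * s = s * (s * y * s) := by rw [← mul_assoc, ← mul_assoc, hss, one_mul]
        _ = (s * y * s) * s := h
        _ = s * y := by rw [mul_assoc, hss, mul_one]
      exact h'.symm
    have hsm2 : smult (smult y s) s = y := by
      rw [hz, smult, if_neg hcz]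
      calc s * (s * y * s) * s = (s * s) * y * (s * s) := by group
      _ = y := by rw [hss]; group
    have hyinv : y⁻¹ = y := (eq_inv_of_mul_eq_one_left hy).symm
    have hkap : kap (s * y * s) = kap y := kap_conj y hy
    refine ⟨by rw [hz]; exact hzz, hsm2, ?_⟩
    have hinv2 : (y * s)⁻¹ = s * y := by rw [mul_inv_rev, hs, Equiv.swap_inv, hyinv, ← hs]
    have hassoc : s * y * s = s * (y * s) := by group
    rcases lt_or_gt_of_ne hyab with hlt | hlt
    · left; refine ⟨hlt, ?_⟩
      have e1 : ell (y * s) = ell y + 1 := (ell_mul_swap hab y).1 hlt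
      have cond : (y * s)⁻¹ a < (y * s)⁻¹ b := by
        rw [hinv2]
        simp only [Equiv.Perm.mul_apply]
        rcases swap_lt hab hlt with ⟨e1', e2'⟩ | h'
        · exact absurd (commute_of_fix y hy e1' e2') hc
        · exact h'
      have e2 : ell (s * (y * s)) = ell (y * s) + 1 := (ell_swap_mul hab (y * s)).1 cond
      rw [hz, hkap, hassoc]
      omega
    · right; refine ⟨hlt, ?_⟩
      have e1 : ell (y * s) + 1 = ell y := (ell_mul_swap hab y).2 hlt
      have cond : (y * s)⁻¹ b < (y * s)⁻¹ a := by
        rw [hinv2]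
        simp only [Equiv.Perm.mul_apply]
        rcases swap_lt hab hlt with ⟨e1', e2'⟩ | h'
        · exact absurd (commute_of_swap y hy e2' e1') hc
        · exact h'
      have e2 : ell (s * (y * s)) + 1 = ell (y * s) := (ell_swap_mul hab (y * s)).2 cond
      rw [hz, hkap, hassoc]
      omega

lemma ell_one : ell (1 : Equiv.Perm (Fin n)) = 0 := by
  rw [ell, Finset.card_eq_zero, Finset.filter_eq_empty_iff]
  intro p _
  simp only [Equiv.Perm.one_apply]
  rintro ⟨h1, h2⟩
  exact absurd h2 (lt_asymm h1)

lemma kap_one : kap (1 : Equiv.Perm (Fin n)) = 0 := by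
  rw [kap, Finset.card_eq_zero, Finset.filter_eq_empty_iff]
  intro i _
  simp only [Equiv.Perm.one_apply]
  exact lt_irrefl i

lemma exists_descent (y : Equiv.Perm (Fin n)) (hy : y * y = 1) (hne : y ≠ 1) :
    ∃ a b : Fin n, (a:ℕ)+1 = b ∧ y b < y a := by
  by_contra h
  push_neg at h

  apply hne
  have mono : ∀ m : ℕ, ∀ hm : m < n, (m : ℕ) ≤ ((y ⟨m, hm⟩ : Fin n) : ℕ) := by
    intro m
    induction m with
    | zero => intro _; exact Nat.zero_le _
    | succ k ih =>
      intro hm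
      have hk : k < n := Nat.lt_of_succ_lt hm
      have hadj : (((⟨k, hk⟩ : Fin n)) : ℕ) + 1 = ((⟨k+1, hm⟩ : Fin n) : ℕ) := rfl
      have hle := h ⟨k, hk⟩ ⟨k+1, hm⟩ hadj
      have hne2 : y ⟨k, hk⟩ ≠ y ⟨k+1, hm⟩ := by
        intro he
        have := y.injective he
        rw [Fin.ext_iff] at this
        simp at this
      have hlt : y ⟨k, hk⟩ < y ⟨k+1, hm⟩ := lt_of_le_of_ne hle hne2
      have hih := ih hk
      rw [Fin.lt_def] at hlt
      omega
  have hfix : ∀ j : Fin n, y j = j := by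
    intro j
    have h1 : (j : ℕ) ≤ ((y j : Fin n) : ℕ) := by
      have := mono j.1 j.2
      simpa using this
    have h2 : ((y j : Fin n) : ℕ) ≤ ((y (y j) : Fin n) : ℕ) := by
      have := mono (y j).1 (y j).2
      simpa using this
    rw [apply_apply hy] at h2
    exact Fin.ext (le_antisymm h2 h1)
  apply Equiv.ext
  intro x
  rw [hfix x]
  rfl

lemma isSimple_iff {s : Equiv.Perm (Fin n)} :
    IsSimple s ↔ ∃ a b : Fin n, (a:ℕ)+1 = (b:ℕ) ∧ s = Equiv.swap a b := by
  constructor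
  · rintro ⟨i, h, rfl⟩
    exact ⟨⟨i, Nat.lt_of_succ_lt h⟩, ⟨i+1, h⟩, rfl, rfl⟩
  · rintro ⟨a, b, hab, rfl⟩
    have h : a.1 + 1 < n := by have := b.isLt; omega
    refine ⟨a.1, h, ?_⟩
    have e1 : (⟨a.1, Nat.lt_of_succ_lt h⟩ : Fin n) = a := Fin.ext rfl
    have e2 : (⟨a.1 + 1, h⟩ : Fin n) = b := Fin.ext hab
    rw [e1, e2]

lemma exists_word : ∀ m : ℕ, ∀ y : Equiv.Perm (Fin n), y * y = 1 → ell y + kap y = m →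
    ∃ L : List (Equiv.Perm (Fin n)),
      (∀ s ∈ L, IsSimple s) ∧ L.foldl smult 1 = y ∧ 2 * L.length = m := by
  intro m
  induction m using Nat.strong_induction_on with
  | _ m ih =>
    intro y hy hm
    by_cases h1 : y = 1
    · subst h1
      have hm0 : m = 0 := by rw [← hm, ell_one, kap_one]
      subst hm0
      exact ⟨[], by simp, rfl, rfl⟩
    · obtain ⟨a, b, hab, hdes⟩ := exists_descent y hy h1
      obtain ⟨hzinv, hsm2, hor⟩ := step hab y hy
      rcases hor with ⟨hasc, _⟩ | ⟨_, hlen⟩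
      · exact absurd hdes (lt_asymm hasc)
      · have hlt : ell (smult y (Equiv.swap a b)) + kap (smult y (Equiv.swap a b)) < m := by
          omega
        obtain ⟨L, hL1, hL2, hL3⟩ :=
          ih _ hlt (smult y (Equiv.swap a b)) hzinv rfl
        refine ⟨L ++ [Equiv.swap a b], ?_, ?_, ?_⟩
        · intro t ht
          rcases List.mem_append.1 ht with h | h
          · exact hL1 t h
          · rw [List.mem_singleton.1 h]
            exact isSimple_iff.2 ⟨a, b, hab, rfl⟩
        · rw [List.foldl_append, hL2]
          exact hsm2
        · simp only [List.length_append, List.length_singleton]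
          omega

lemma word_bound : ∀ L : List (Equiv.Perm (Fin n)), (∀ s ∈ L, IsSimple s) →
    (L.foldl smult 1) * (L.foldl smult 1) = 1 ∧
    ell (L.foldl smult 1) + kap (L.foldl smult 1) ≤ 2 * L.length := by
  intro L
  induction L using List.reverseRecOn with
  | nil =>
    intro _
    constructor
    · simp
    · simp [ell_one, kap_one]
  | append_singleton L s ih =>
    intro hL
    have h1 := ih (fun t ht => hL t (List.mem_append.2 (Or.inl ht)))
    have hs : IsSimple s := hL s (List.mem_append.2 (Or.inr (List.mem_singleton.2 rfl)))
    obtain ⟨a, b, hab, rfl⟩ := isSimple_iff.1 hs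
    obtain ⟨hinv, _, hor⟩ := step hab (L.foldl smult 1) h1.1
    rw [List.foldl_append]
    simp only [List.foldl_cons, List.foldl_nil]
    refine ⟨hinv, ?_⟩
    simp only [List.length_append, List.length_singleton]
    have h2 := h1.2
    rcases hor with ⟨_, h⟩ | ⟨_, h⟩ <;> omega

end InvolWord

/-- Every involution `y` of `S_n` admits an involution word (a sequence of simple
transpositions producing `y` from the identity via `⋊`), and any such sequence of
minimal length has length `(ℓ(y) + κ(y))/2`. -/
theorem stmt2 {n : ℕ} (y : Equiv.Perm (Fin n)) (hy : y * y = 1) :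
    (∃ L : List (Equiv.Perm (Fin n)), (∀ s ∈ L, IsSimple s) ∧ L.foldl smult 1 = y) ∧
    (∀ L : List (Equiv.Perm (Fin n)), (∀ s ∈ L, IsSimple s) → L.foldl smult 1 = y →
      (∀ L' : List (Equiv.Perm (Fin n)), (∀ s ∈ L', IsSimple s) → L'.foldl smult 1 = y →
        L.length ≤ L'.length) →
      2 * L.length = ell y + kap y) := by
  obtain ⟨L0, hL01, hL02, hL03⟩ := InvolWord.exists_word (ell y + kap y) y hy rfl
  constructor
  · exact ⟨L0, hL01, hL02⟩
  · intro L hL1 hL2 hmin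
    have hb := (InvolWord.word_bound L hL1).2
    rw [hL2] at hb
    have hle := hmin L0 hL01 hL02
    omega
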